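/- arXiv:1707.03091 — 2 statements merged into one kernel-verified Lean document; each statement's English description precedes it below -/
import Mathlib

section
/- Let r ≥ 2, let G be an r-graph and let S be a vertex cover of G. Then there exist a subset S' ⊆ S and a subgraph G' ⊆ G such that e(G') ≥ (r/2^r)·e(G) and every edge e of G' satisfies |e ∩ S'| = 1. -/
open Finset

/-- `G` is an `r`-uniform hypergraph (an `r`-graph): every edge has exactly `r` vertices. -/
def IsUniform {V : Type*} (G : Finset (Finset V)) (r : ℕ) : Prop := ∀ e ∈ G, e.card = r

lemma nat_key {k r : ℕ} (hk : 1 ≤ k) (hkr : k ≤ r) : r * 2 ^ k ≤ k * 2 ^ r := by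
  have h1 : r - k + 1 ≤ 2 ^ (r - k) := Nat.lt_two_pow_self
  have h2 : r ≤ k * 2 ^ (r - k) := by
    calc r = (r - k) + k := (Nat.sub_add_cancel hkr).symm
    _ ≤ k * (r - k) + k * 1 := by
        have := Nat.mul_le_mul_right (r - k) hk
        omega
    _ = k * ((r - k) + 1) := by ring
    _ ≤ k * 2 ^ (r - k) := Nat.mul_le_mul_left _ h1
  calc r * 2 ^ k ≤ (k * 2 ^ (r - k)) * 2 ^ k := Nat.mul_le_mul_right _ h2
  _ = k * 2 ^ ((r - k) + k) := by rw [pow_add]; ring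
  _ = k * 2 ^ r := by rw [Nat.sub_add_cancel hkr]

lemma count_inter_singleton {V : Type*} [DecidableEq V] (S A : Finset V) (hAS : A ⊆ S)
    (a : V) (ha : a ∈ A) :
    (S.powerset.filter (fun S' => S' ∩ A = {a})).card = 2 ^ (S.card - A.card) := by
  rw [← Finset.card_sdiff_of_subset hAS, ← Finset.card_powerset]
  apply Finset.card_bij' (fun S' _ => S' \ A) (fun B _ => insert a B)
  · intro S' hS'
    simp only [Finset.mem_filter, Finset.mem_powerset] at hS'
    simp only [Finset.mem_powerset]
    intro x hx
    simp only [Finset.mem_sdiff] at hx ⊢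
    exact ⟨hS'.1 hx.1, hx.2⟩
  · intro B hB
    simp only [Finset.mem_powerset] at hB
    simp only [Finset.mem_filter, Finset.mem_powerset]
    constructor
    · intro x hx
      rcases Finset.mem_insert.mp hx with h | h
      · exact h ▸ hAS ha
      · exact (Finset.mem_sdiff.mp (hB h)).1
    · ext x
      simp only [Finset.mem_inter, Finset.mem_insert, Finset.mem_singleton]
      constructor
      · rintro ⟨h | h, hxA⟩
        · exact h
        · exact absurd hxA (Finset.mem_sdiff.mp (hB h)).2
      · rintro rfl; exact ⟨Or.inl rfl, ha⟩
  · intro S' hS'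
    simp only [Finset.mem_filter, Finset.mem_powerset] at hS'
    ext x
    simp only [Finset.mem_insert, Finset.mem_sdiff]
    constructor
    · rintro (rfl | ⟨h, _⟩)
      · have : x ∈ S' ∩ A := hS'.2 ▸ Finset.mem_singleton_self x
        exact (Finset.mem_inter.mp this).1
      · exact h
    · intro hx
      by_cases hxA : x ∈ A
      · have : x ∈ S' ∩ A := Finset.mem_inter.mpr ⟨hx, hxA⟩
        rw [hS'.2] at this
        exact Or.inl (Finset.mem_singleton.mp this)
      · exact Or.inr ⟨hx, hxA⟩
  · intro B hB
    simp only [Finset.mem_powerset] at hB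
    ext x
    simp only [Finset.mem_sdiff, Finset.mem_insert]
    constructor
    · rintro ⟨rfl | h, hxA⟩
      · exact absurd ha hxA
      · exact h
    · intro hx
      exact ⟨Or.inr hx, (Finset.mem_sdiff.mp (hB hx)).2⟩

lemma count_inter_card_one {V : Type*} [DecidableEq V] (S A : Finset V) (hAS : A ⊆ S) :
    (S.powerset.filter (fun S' => (S' ∩ A).card = 1)).card
      = A.card * 2 ^ (S.card - A.card) := by
  have hset : S.powerset.filter (fun S' => (S' ∩ A).card = 1)
      = A.biUnion (fun a => S.powerset.filter (fun S' => S' ∩ A = {a})) := by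
    ext S'
    simp only [Finset.mem_biUnion, Finset.mem_filter, Finset.mem_powerset, Finset.card_eq_one]
    constructor
    · rintro ⟨hS', x, hx⟩
      have hxA : x ∈ A := by
        have : x ∈ S' ∩ A := hx ▸ Finset.mem_singleton_self x
        exact (Finset.mem_inter.mp this).2
      exact ⟨x, hxA, hS', hx⟩
    · rintro ⟨x, hxA, hS', hx⟩
      exact ⟨hS', x, hx⟩
  rw [hset, Finset.card_biUnion]
  · rw [Finset.sum_congr rfl (fun a ha => count_inter_singleton S A hAS a ha),
      Finset.sum_const, smul_eq_mul]
  · intro a ha b hb hab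
    apply Finset.disjoint_left.mpr
    intro S' hSa hSb
    simp only [Finset.mem_filter] at hSa hSb
    apply hab
    have := hSa.2.symm.trans hSb.2
    exact Finset.singleton_injective this

/-- **Cross-cut lemma.** Let `r ≥ 2`, let `G` be an `r`-graph and `S` a vertex cover of `G`.
Then there are `S' ⊆ S` and a subgraph `G' ⊆ G` with `e(G') ≥ (r/2^r)·e(G)` such that every
edge of `G'` meets `S'` in exactly one vertex. -/
theorem cross_cut {V : Type*} [DecidableEq V] (r : ℕ) (hr : 2 ≤ r)
    (G : Finset (Finset V)) (hGr : IsUniform G r)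
    (S : Finset V) (hcov : ∀ e ∈ G, ∃ x ∈ S, x ∈ e) :
    ∃ (S' : Finset V) (G' : Finset (Finset V)),
      S' ⊆ S ∧ G' ⊆ G ∧
      ((r : ℝ) / 2 ^ r) * (G.card : ℝ) ≤ (G'.card : ℝ) ∧
      ∀ e ∈ G', (e ∩ S').card = 1 := by
  classical
  set P := S.powerset with hP
  -- double counting
  have swap : ∑ S' ∈ P, ((G.filter (fun e => (e ∩ S').card = 1)).card : ℝ)
      = ∑ e ∈ G, ((P.filter (fun S' => (e ∩ S').card = 1)).card : ℝ) := by
    simp_rw [Finset.card_filter]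
    push_cast
    exact Finset.sum_comm
  -- per-edge lower bound
  have hedge : ∀ e ∈ G,
      (2 : ℝ) ^ S.card * ((r : ℝ) / 2 ^ r)
        ≤ ((P.filter (fun S' => (e ∩ S').card = 1)).card : ℝ) := by
    intro e he
    set A := e ∩ S with hA
    have hAS : A ⊆ S := Finset.inter_subset_right
    have hAe : A ⊆ e := Finset.inter_subset_left
    have hk1 : 1 ≤ A.card := by
      obtain ⟨x, hxS, hxe⟩ := hcov e he
      exact Finset.card_pos.mpr ⟨x, Finset.mem_inter.mpr ⟨hxe, hxS⟩⟩
    have hkr : A.card ≤ r := by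
      rw [← hGr e he]; exact Finset.card_le_card hAe
    have hkS : A.card ≤ S.card := Finset.card_le_card hAS
    have hfeq : P.filter (fun S' => (e ∩ S').card = 1)
        = P.filter (fun S' => (S' ∩ A).card = 1) := by
      apply Finset.filter_congr
      intro S' hS'
      rw [Finset.mem_powerset] at hS'
      have : e ∩ S' = S' ∩ A := by
        ext x
        simp only [Finset.mem_inter, hA]
        constructor
        · rintro ⟨h1, h2⟩; exact ⟨h2, h1, hS' h2⟩
        · rintro ⟨h1, h2, _⟩; exact ⟨h2, h1⟩
      rw [this]
    rw [hfeq, count_inter_card_one S A hAS]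
    push_cast
    have h2 : (2 : ℝ) ^ S.card = 2 ^ (S.card - A.card) * 2 ^ A.card := by
      rw [← pow_add, Nat.sub_add_cancel hkS]
    rw [h2]
    rw [← mul_div_assoc, div_le_iff₀ (by positivity : (0:ℝ) < 2 ^ r)]
    have := nat_key hk1 hkr
    have hcast : (r : ℝ) * 2 ^ A.card ≤ (A.card : ℝ) * 2 ^ r := by
      exact_mod_cast this
    nlinarith [pow_pos (by norm_num : (0:ℝ) < 2) (S.card - A.card),
      pow_pos (by norm_num : (0:ℝ) < 2) A.card, pow_pos (by norm_num : (0:ℝ) < 2) r]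
  -- total lower bound
  have htotal : (P.card : ℝ) * (((r : ℝ) / 2 ^ r) * G.card)
      ≤ ∑ S' ∈ P, ((G.filter (fun e => (e ∩ S').card = 1)).card : ℝ) := by
    rw [swap]
    have : (G.card : ℝ) * ((2 : ℝ) ^ S.card * ((r : ℝ) / 2 ^ r))
        ≤ ∑ e ∈ G, ((P.filter (fun S' => (e ∩ S').card = 1)).card : ℝ) := by
      calc (G.card : ℝ) * ((2 : ℝ) ^ S.card * ((r : ℝ) / 2 ^ r))
          = ∑ _e ∈ G, ((2 : ℝ) ^ S.card * ((r : ℝ) / 2 ^ r)) := by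
            rw [Finset.sum_const, nsmul_eq_mul]
        _ ≤ _ := Finset.sum_le_sum hedge
    have hPcard : (P.card : ℝ) = 2 ^ S.card := by
      rw [hP, Finset.card_powerset]; push_cast; ring
    rw [hPcard]
    calc (2 : ℝ) ^ S.card * (((r : ℝ) / 2 ^ r) * G.card)
        = (G.card : ℝ) * ((2 : ℝ) ^ S.card * ((r : ℝ) / 2 ^ r)) := by ring
      _ ≤ _ := this
  -- averaging
  have hne : P.Nonempty := ⟨∅, Finset.empty_mem_powerset S⟩
  have havg : ∃ S' ∈ P, ((r : ℝ) / 2 ^ r) * G.card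
      ≤ ((G.filter (fun e => (e ∩ S').card = 1)).card : ℝ) := by
    by_contra h
    push_neg at h
    have : ∑ S' ∈ P, ((G.filter (fun e => (e ∩ S').card = 1)).card : ℝ)
        < ∑ _S' ∈ P, ((r : ℝ) / 2 ^ r) * G.card :=
      Finset.sum_lt_sum_of_nonempty hne (fun S' hS' => h S' hS')
    rw [Finset.sum_const, nsmul_eq_mul] at this
    linarith
  obtain ⟨S', hS'P, hS'⟩ := havg
  refine ⟨S', G.filter (fun e => (e ∩ S').card = 1),
    Finset.mem_powerset.mp hS'P, Finset.filter_subset _ _, hS', ?_⟩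
  intro e he
  exact (Finset.mem_filter.mp he).2
end

section
/- Under the hypotheses of the C_{2k}-counting lemma for trees (T a tree of height h ≤ k in a graph G rooted at x with levels L_1,…,L_h; W ⊆ V(G)\V(T); F_j a bipartite subgraph between L_h and a set W_j ⊆ W in which every vertex w ∈ W_j sends all its F_j-edges into the leaf set S_e = L_h ∩ V(T_{z_e}) of the subtree rooted at a single vertex z_e = r(w) ∈ L_j, and every such w has at least k neighbours in L_h ∩ V(T_{r(w)}) lying outside T_z for each child z of r(w)): every path P of length 2m−1 in F_j, where m = k − (h − j), extends to a cycle of length 2k in G that contains a vertex of L_j. -/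
/-- The vertex set of the tree `T` rooted at `x` (the vertices reachable from `x` in `T`). -/
def treeVerts {V : Type*} (T : SimpleGraph V) (x : V) : Set V :=
  {v | T.Reachable x v}

/-- The `j`-th level of the tree `T` rooted at `x`: the vertices of `T` at distance `j`
from the root. -/
def level {V : Type*} (T : SimpleGraph V) (x : V) (j : ℕ) : Set V :=
  {v | T.Reachable x v ∧ T.dist x v = j}

/-- `u` is a vertex of the subtree of `T` (rooted at `x`) hanging from `z`: `u` is a vertex of
the tree and the unique path from the root `x` to `u` passes through `z`. -/
def InSubtree {V : Type*} (T : SimpleGraph V) (x z u : V) : Prop :=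
  T.Reachable x u ∧ T.dist x u = T.dist x z + T.dist z u

section Helpers
open SimpleGraph Set
variable {V : Type*}

lemma exists_walk_getVert {G : SimpleGraph V} {a b : V} (p : G.Walk a b) :
    ∀ s t : ℕ, s ≤ t → ∃ q : G.Walk (p.getVert s) (p.getVert t), q.length ≤ t - s := by
  induction p with
  | nil =>
    intro s t _
    exact ⟨(Walk.nil).copy rfl rfl, by simp⟩
  | @cons a c b hac q ih =>
    intro s t hst
    cases s with
    | zero =>
      cases t with
      | zero => exact ⟨(Walk.nil).copy rfl rfl, by simp⟩
      | succ t =>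
        obtain ⟨q', hq'⟩ := ih 0 t (Nat.zero_le _)
        refine ⟨Walk.cons hac (q'.copy (Walk.getVert_zero q) rfl), ?_⟩
        have e1 := Walk.length_cons hac (q'.copy (Walk.getVert_zero q) rfl)
        rw [Walk.length_copy] at e1
        exact le_of_eq_of_le e1 (by omega)
    | succ s =>
      cases t with
      | zero => omega
      | succ t =>
        obtain ⟨q', hq'⟩ := ih s t (by omega)
        exact ⟨q', le_of_le_of_eq hq' (by omega)⟩

lemma reachable_getVert {G : SimpleGraph V} {a b : V} (p : G.Walk a b) (s : ℕ) :
    G.Reachable a (p.getVert s) :=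
  ⟨((exists_walk_getVert p 0 s (Nat.zero_le _)).choose).copy (p.getVert_zero) rfl⟩

lemma reachable_getVert_right {G : SimpleGraph V} {a b : V} (p : G.Walk a b) {s : ℕ}
    (hs : s ≤ p.length) : G.Reachable (p.getVert s) b :=
  ⟨((exists_walk_getVert p s p.length hs).choose).copy rfl (p.getVert_length)⟩

lemma dist_getVert_le {G : SimpleGraph V} {a b : V} (p : G.Walk a b) {s t : ℕ} (hst : s ≤ t) :
    G.dist (p.getVert s) (p.getVert t) ≤ t - s := by
  obtain ⟨q, hq⟩ := exists_walk_getVert p s t hst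
  exact le_trans (SimpleGraph.dist_le q) hq

lemma reachable_getVert_getVert {G : SimpleGraph V} {a b : V} (p : G.Walk a b) {s t : ℕ}
    (hst : s ≤ t) : G.Reachable (p.getVert s) (p.getVert t) :=
  ⟨(exists_walk_getVert p s t hst).choose⟩

lemma dist_triangle_of_reachable {G : SimpleGraph V} {u v w : V}
    (h1 : G.Reachable u v) (h2 : G.Reachable v w) :
    G.dist u w ≤ G.dist u v + G.dist v w := by
  obtain ⟨p, hp⟩ := h1.exists_walk_length_eq_dist
  obtain ⟨q, hq⟩ := h2.exists_walk_length_eq_dist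
  calc G.dist u w ≤ (p.append q).length := SimpleGraph.dist_le _
    _ = _ := by rw [Walk.length_append, hp, hq]

lemma ancestor_unique {T : SimpleGraph V} (hacyc : T.IsAcyclic) {x z z' u : V}
    (hz : T.Reachable x z) (hz' : T.Reachable x z')
    (hjj : T.dist x z = T.dist x z') (hu : T.Reachable x u)
    (h1 : T.dist x u = T.dist x z + T.dist z u)
    (h2 : T.dist x u = T.dist x z' + T.dist z' u) : z = z' := by
  obtain ⟨p1, hp1⟩ := hz.exists_walk_length_eq_dist
  obtain ⟨q1, hq1⟩ := (hz.symm.trans hu).exists_walk_length_eq_dist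
  obtain ⟨p2, hp2⟩ := hz'.exists_walk_length_eq_dist
  obtain ⟨q2, hq2⟩ := (hz'.symm.trans hu).exists_walk_length_eq_dist
  have hw1 : (p1.append q1).length = T.dist x u := by
    rw [Walk.length_append, hp1, hq1, ← h1]
  have hw2 : (p2.append q2).length = T.dist x u := by
    rw [Walk.length_append, hp2, hq2, ← h2]
  have hpath1 := (p1.append q1).isPath_of_length_eq_dist hw1
  have hpath2 := (p2.append q2).isPath_of_length_eq_dist hw2
  have heq : (⟨p1.append q1, hpath1⟩ : T.Path x u) = ⟨p2.append q2, hpath2⟩ :=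
    hacyc.path_unique _ _
  have heqw : p1.append q1 = p2.append q2 := congrArg Subtype.val heq
  have e1 : (p1.append q1).getVert (T.dist x z) = z := by
    rw [Walk.getVert_append]
    rw [hp1]
    simp
  have e2 : (p2.append q2).getVert (T.dist x z) = z' := by
    rw [Walk.getVert_append, hp2, hjj]
    simp
  rw [← e1, heqw, e2]

lemma geodesic_level {T : SimpleGraph V} {x z y : V} (p : T.Walk z y)
    (hp : p.length = T.dist z y) (hxz : T.Reachable x z)
    (hxy : T.dist x y = T.dist x z + T.dist z y) {s : ℕ} (hs : s ≤ p.length) :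
    T.Reachable x (p.getVert s) ∧ T.dist x (p.getVert s) = T.dist x z + s := by
  have hr1 : T.Reachable z (p.getVert s) := reachable_getVert p s
  have hreach : T.Reachable x (p.getVert s) := hxz.trans hr1
  have h0 : T.dist z (p.getVert s) ≤ s := by
    have := dist_getVert_le p (Nat.zero_le s)
    simpa using this
  have hub : T.dist x (p.getVert s) ≤ T.dist x z + s :=
    le_trans (dist_triangle_of_reachable hxz hr1) (by omega)
  have h2 : T.dist (p.getVert s) y ≤ p.length - s := by
    have := dist_getVert_le p hs
    rwa [Walk.getVert_length] at this
  have h3 : T.dist x y ≤ T.dist x (p.getVert s) + T.dist (p.getVert s) y :=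
    dist_triangle_of_reachable hreach (reachable_getVert_right p hs)
  exact ⟨hreach, by omega⟩

lemma geodesic_subtree {T : SimpleGraph V} {x z y : V} (p : T.Walk z y)
    (hp : p.length = T.dist z y) (hxz : T.Reachable x z)
    (hxy : T.dist x y = T.dist x z + T.dist z y) {s : ℕ} (hs1 : 1 ≤ s) (hs : s ≤ p.length) :
    InSubtree T x (p.getVert 1) (p.getVert s) := by
  have hl1 := geodesic_level p hp hxz hxy (le_trans hs1 hs)
  have hls := geodesic_level p hp hxz hxy hs
  have hd1 : T.dist (p.getVert 1) (p.getVert s) ≤ s - 1 := dist_getVert_le p hs1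
  have htri : T.dist x (p.getVert s) ≤
      T.dist x (p.getVert 1) + T.dist (p.getVert 1) (p.getVert s) :=
    dist_triangle_of_reachable hl1.1 (reachable_getVert_getVert p hs1)
  exact ⟨hls.1, by omega⟩

lemma inSubtree_of_mid {T : SimpleGraph V} {x c y u : V}
    (hxc : T.Reachable x c) (hyu : T.Reachable y u)
    (hcy : InSubtree T x c y) (hxu : T.Reachable x u)
    (hmid : T.dist x u = T.dist x y + T.dist y u) : InSubtree T x c u := by
  obtain ⟨hxy, hdy⟩ := hcy
  have hcy' : T.Reachable c y := hxc.symm.trans hxy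
  have t1 : T.dist c u ≤ T.dist c y + T.dist y u := dist_triangle_of_reachable hcy' hyu
  have t2 : T.dist x u ≤ T.dist x c + T.dist c u :=
    dist_triangle_of_reachable hxc (hcy'.trans hyu)
  exact ⟨hxu, by omega⟩

lemma alternation {T F : SimpleGraph V} {x : V} {h : ℕ} {W Wj : Set V}
    (hWjW : Wj ⊆ W) (hW : Disjoint W (treeVerts T x))
    (hbip : ∀ u w : V, F.Adj u w →
      (u ∈ level T x h ∧ w ∈ Wj) ∨ (u ∈ Wj ∧ w ∈ level T x h))
    (v : ℕ → V) (N : ℕ) (hadj : ∀ i < N, F.Adj (v i) (v (i + 1)))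
    (hv0 : v 0 ∈ level T x h) :
    ∀ i ≤ N, (Even i → v i ∈ level T x h) ∧ (Odd i → v i ∈ Wj) := by
  have hdisj : ∀ y, y ∈ level T x h → y ∉ Wj := fun y hy hy2 =>
    Set.disjoint_left.mp hW (hWjW hy2) hy.1
  intro i
  induction i with
  | zero =>
    intro _
    exact ⟨fun _ => hv0, fun ho => absurd ho (by simp [Nat.odd_iff])⟩
  | succ n ih =>
    intro hn
    obtain ⟨hE, hO⟩ := ih (by omega)
    have hadj' := hadj n (by omega)
    rcases Nat.even_or_odd n with he | ho
    · have h1 : v n ∈ level T x h := hE he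
      rcases hbip _ _ hadj' with ⟨_, h2⟩ | ⟨h2, _⟩
      · refine ⟨fun hc => ?_, fun _ => h2⟩
        exact (Nat.even_add_one.mp hc he).elim
      · exact (hdisj _ h1 h2).elim
    · have h1 : v n ∈ Wj := hO ho
      rcases hbip _ _ hadj' with ⟨h2, _⟩ | ⟨_, h3⟩
      · exact (hdisj _ h2 h1).elim
      · refine ⟨fun _ => h3, fun hodd => ?_⟩
        exact (Nat.odd_add_one.mp hodd ho).elim

lemma caseA {V : Type*} [Fintype V]
    (G T F : SimpleGraph V) (x : V) (h k j : ℕ)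
    (hhk : h ≤ k) (hj1 : 1 ≤ j) (hjh : j < h)
    (hTG : T ≤ G) (hFG : F ≤ G) (hacyc : T.IsAcyclic)
    (W Wj : Set V) (hWjW : Wj ⊆ W) (hW : Disjoint W (treeVerts T x))
    (hbip : ∀ u w : V, F.Adj u w →
      (u ∈ level T x h ∧ w ∈ Wj) ∨ (u ∈ Wj ∧ w ∈ level T x h))
    (hsector : ∀ w ∈ Wj, ∃ z : V, z ∈ level T x j ∧
      (∀ u : V, F.Adj w u → u ∈ level T x h ∧ InSubtree T x z u) ∧
      (∀ z' : V, T.Adj z z' → T.dist x z' = T.dist x z + 1 →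
        k ≤ {u : V | F.Adj w u ∧ u ∈ level T x h ∧ InSubtree T x z u ∧
              ¬ InSubtree T x z' u}.ncard))
    (v : ℕ → V) (hvinj : Set.InjOn v (Set.Iic (2 * (k - (h - j)) - 1)))
    (hadj : ∀ i < 2 * (k - (h - j)) - 1, F.Adj (v i) (v (i + 1)))
    (hv0 : v 0 ∈ level T x h) :
    ∃ w : ℕ → V, Set.InjOn w (Set.Iio (2 * k)) ∧
      (∀ i < 2 * k, G.Adj (w i) (w ((i + 1) % (2 * k)))) ∧
      (∃ i < 2 * k, w i ∈ level T x j) ∧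
      ((fun i => s(v i, v (i + 1))) '' Set.Iio (2 * (k - (h - j)) - 1)) ⊆
        ((fun i => s(w i, w ((i + 1) % (2 * k)))) '' Set.Iio (2 * k)) := by
  set m := k - (h - j) with hm_def
  have hm1 : 1 ≤ m := by omega
  have hd1 : 1 ≤ h - j := by omega
  have hk2 : 2 * k = 2 * m + 2 * (h - j) := by omega
  have halt := alternation hWjW hW hbip v (2 * m - 1) hadj hv0
  have hWnr : ∀ y ∈ Wj, ¬ T.Reachable x y := fun y hy hr =>
    Set.disjoint_left.mp hW (hWjW hy) hr
  have hlast : v (2 * m - 1) ∈ Wj := (halt (2 * m - 1) le_rfl).2 ⟨m - 1, by omega⟩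
  obtain ⟨z, hzlev, hzall, hzchild⟩ := hsector _ hlast
  -- uniqueness of the level-j ancestor
  have uniq : ∀ w1 z1 z2 : V, z1 ∈ level T x j → z2 ∈ level T x j →
      InSubtree T x z1 w1 → InSubtree T x z2 w1 → z1 = z2 := fun w1 z1 z2 hz1 hz2 h1 h2 =>
    ancestor_unique hacyc hz1.1 hz2.1 (by rw [hz1.2, hz2.2]) h1.1 h1.2 h2.2
  -- all sector roots along the path coincide with z
  have chain : ∀ t ≤ m - 1, ∀ zz, zz ∈ level T x j →
      (∀ u : V, F.Adj (v (2 * (m - 1 - t) + 1)) u → u ∈ level T x h ∧ InSubtree T x zz u) →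
      zz = z := by
    intro t
    induction t with
    | zero =>
      intro _ zz hzzlev hzzall
      have hidx : 2 * (m - 1 - 0) + 1 = 2 * m - 1 := by omega
      rw [hidx] at hzzall
      have hnb : F.Adj (v (2 * m - 1)) (v (2 * m - 2)) := by
        have h1 := hadj (2 * m - 2) (by omega)
        have h2 : 2 * m - 2 + 1 = 2 * m - 1 := by omega
        rw [h2] at h1
        exact h1.symm
      exact uniq (v (2 * m - 2)) zz z hzzlev hzlev (hzzall _ hnb).2 (hzall _ hnb).2
    | succ t ih =>
      intro ht zz hzzlev hzzall
      have hwnext : v (2 * (m - 1 - t) + 1) ∈ Wj :=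
        (halt _ (by omega)).2 ⟨m - 1 - t, rfl⟩
      obtain ⟨z2, hz2lev, hz2all, _⟩ := hsector _ hwnext
      have hz2 : z2 = z := ih (by omega) z2 hz2lev hz2all
      have e1 : F.Adj (v (2 * (m - 1 - (t + 1)) + 1)) (v (2 * (m - 1 - t))) := by
        have h1 := hadj (2 * (m - 1 - (t + 1)) + 1) (by omega)
        have h2 : 2 * (m - 1 - (t + 1)) + 1 + 1 = 2 * (m - 1 - t) := by omega
        rw [h2] at h1
        exact h1
      have e2 : F.Adj (v (2 * (m - 1 - t) + 1)) (v (2 * (m - 1 - t))) :=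
        (hadj (2 * (m - 1 - t)) (by omega)).symm
      rw [hz2] at hz2all
      exact uniq _ zz z hzzlev hzlev (hzzall _ e1).2 (hz2all _ e2).2
  -- v 0 lies in the subtree of z
  have hsub0 : InSubtree T x z (v 0) := by
    have hz1w : v 1 ∈ Wj := (halt 1 (by omega)).2 ⟨0, rfl⟩
    obtain ⟨z1, hz1lev, hz1all, _⟩ := hsector _ hz1w
    have hz1z : z1 = z := by
      refine chain (m - 1) le_rfl z1 hz1lev ?_
      have hidx : 2 * (m - 1 - (m - 1)) + 1 = 1 := by omega
      rw [hidx]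
      exact hz1all
    have e0 : F.Adj (v 1) (v 0) := (hadj 0 (by omega)).symm
    rw [← hz1z]
    exact (hz1all _ e0).2
  have hdzv0 : T.dist z (v 0) = h - j := by
    have h1 := hsub0.2
    have h2 := hv0.2
    have h3 := hzlev.2
    omega
  -- geodesic from z down to v 0
  obtain ⟨P2, hP2len⟩ := (hzlev.1.symm.trans hv0.1).exists_walk_length_eq_dist
  have hP2d : P2.length = h - j := by rw [hP2len, hdzv0]
  have hg2 : ∀ s ≤ P2.length,
      T.Reachable x (P2.getVert s) ∧ T.dist x (P2.getVert s) = T.dist x z + s :=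
    fun s hs => geodesic_level P2 hP2len hzlev.1 hsub0.2 hs
  have hlen1 : 1 ≤ P2.length := by omega
  have hadjz : T.Adj z (P2.getVert 1) := by
    have h1 := P2.adj_getVert_succ (i := 0) (by omega)
    rwa [P2.getVert_zero] at h1
  have hz'' := hg2 1 hlen1
  have hSk := hzchild (P2.getVert 1) hadjz hz''.2
  -- choose a fresh leaf u
  classical
  set A : Finset V := Finset.image (fun t => v (2 * t)) (Finset.Icc 1 (m - 1)) with hA_def
  have hAcard : A.card ≤ m - 1 := by
    refine le_trans (Finset.card_image_le) ?_
    rw [Nat.card_Icc]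
    omega
  have hex : ({u : V | F.Adj (v (2 * m - 1)) u ∧ u ∈ level T x h ∧ InSubtree T x z u ∧
      ¬ InSubtree T x (P2.getVert 1) u} \ ↑A).Nonempty := by
    rw [Set.nonempty_iff_ne_empty]
    intro hempty
    have hsub : {u : V | F.Adj (v (2 * m - 1)) u ∧ u ∈ level T x h ∧ InSubtree T x z u ∧
        ¬ InSubtree T x (P2.getVert 1) u} ⊆ ↑A := by
      rw [Set.diff_eq_empty] at hempty
      exact hempty
    have := Set.ncard_le_ncard hsub (Set.toFinite _)
    rw [Set.ncard_coe_finset] at this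
    omega
  obtain ⟨u, huS, huA⟩ := hex
  obtain ⟨huF, hulev, huz, hunz⟩ := huS
  have hdzu : T.dist z u = h - j := by
    have h1 := huz.2
    have h2 := hulev.2
    have h3 := hzlev.2
    omega
  -- geodesic from z down to u
  obtain ⟨P1, hP1len⟩ := (hzlev.1.symm.trans hulev.1).exists_walk_length_eq_dist
  have hP1d : P1.length = h - j := by rw [hP1len, hdzu]
  have hg1 : ∀ s ≤ P1.length,
      T.Reachable x (P1.getVert s) ∧ T.dist x (P1.getVert s) = T.dist x z + s :=
    fun s hs => geodesic_level P1 hP1len hzlev.1 huz.2 hs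
  have hP1u : P1.getVert (h - j) = u := by rw [← hP1d]; exact P1.getVert_length
  have hP2v0 : P2.getVert (h - j) = v 0 := by rw [← hP2d]; exact P2.getVert_length
  -- v 0 is in the subtree of the child P2.getVert 1
  have hv0sub : InSubtree T x (P2.getVert 1) (v 0) := by
    have h1 := geodesic_subtree P2 hP2len hzlev.1 hsub0.2 hlen1 (le_refl P2.length)
    rwa [P2.getVert_length] at h1
  -- cross-distinctness of the two geodesics
  have hcross : ∀ s t : ℕ, 1 ≤ s → s ≤ P1.length → 1 ≤ t → t ≤ P2.length →
      P1.getVert s ≠ P2.getVert t := by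
    intro s t hs1 hs2 ht1 ht2 heq
    have l1 := (hg1 s hs2).2
    have l2 := (hg2 t ht2).2
    have hy2 : InSubtree T x (P2.getVert 1) (P2.getVert t) :=
      geodesic_subtree P2 hP2len hzlev.1 hsub0.2 ht1 ht2
    rw [← heq] at hy2
    have hle2 : T.dist (P1.getVert s) u ≤ P1.length - s := by
      have h1 := dist_getVert_le P1 hs2
      rwa [P1.getVert_length] at h1
    have htri : T.dist x u ≤ T.dist x (P1.getVert s) + T.dist (P1.getVert s) u :=
      dist_triangle_of_reachable (hg1 s hs2).1 (reachable_getVert_right P1 hs2)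
    have hmid : T.dist x u = T.dist x (P1.getVert s) + T.dist (P1.getVert s) u := by
      have h2 := hulev.2
      have h3 := hzlev.2
      omega
    exact hunz (inSubtree_of_mid hz''.1 (reachable_getVert_right P1 hs2) hy2 hulev.1 hmid)

  -- the cycle map and its defining equations
  have main : ∀ wf : ℕ → V,
      (∀ i, i < 2 * m → wf i = v i) →
      (∀ i, 2 * m ≤ i → i < 2 * m + (h - j) → wf i = P1.getVert (2 * m + (h - j) - i)) →
      (∀ i, 2 * m + (h - j) ≤ i → wf i = P2.getVert (i - (2 * m + (h - j)))) →
      Set.InjOn wf (Set.Iio (2 * k)) ∧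
      (∀ i < 2 * k, G.Adj (wf i) (wf ((i + 1) % (2 * k)))) ∧
      (∃ i < 2 * k, wf i ∈ level T x j) ∧
      ((fun i => s(v i, v (i + 1))) '' Set.Iio (2 * m - 1)) ⊆
        ((fun i => s(wf i, wf ((i + 1) % (2 * k)))) '' Set.Iio (2 * k)) := by
    intro wf e1 e2 e3
    have dv : ∀ i, i < 2 * m → Even i → T.Reachable x (v i) ∧ T.dist x (v i) = h := by
      intro i hi he
      have h1 := (halt i (by omega)).1 he
      exact ⟨h1.1, h1.2⟩
    have key : ∀ i1 i2, i1 < 2 * k → i2 < 2 * k → i1 ≤ i2 → wf i1 = wf i2 → i1 = i2 := by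
      intro i1 i2 h1 h2 hle heq
      rcases lt_or_ge i2 (2 * m) with c2 | c2
      · have c1 : i1 < 2 * m := by omega
        rw [e1 i1 c1, e1 i2 c2] at heq
        exact hvinj (by simp only [Set.mem_Iic]; omega) (by simp only [Set.mem_Iic]; omega) heq
      · rcases lt_or_ge i2 (2 * m + (h - j)) with c3 | c3
        · -- i2 on the geodesic to u
          have hs2a : 1 ≤ 2 * m + (h - j) - i2 := by omega
          have hs2b : 2 * m + (h - j) - i2 ≤ P1.length := by omega
          rw [e2 i2 c2 c3] at heq
          have hgb := hg1 (2 * m + (h - j) - i2) hs2b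
          rcases lt_or_ge i1 (2 * m) with c1 | c1
          · rw [e1 i1 c1] at heq
            rcases Nat.even_or_odd i1 with p1 | p1
            · have hv := dv i1 c1 p1
              by_cases hc : i2 = 2 * m
              · -- the other end is the fresh leaf u
                exfalso
                have harith : 2 * m + (h - j) - i2 = h - j := by omega
                rw [harith, hP1u] at heq
                rcases Nat.eq_zero_or_pos i1 with h0 | hpos
                · subst h0
                  rw [← heq] at hunz
                  exact hunz hv0sub
                · apply huA
                  rw [hA_def]
                  obtain ⟨t, ht⟩ := p1
                  refine Finset.mem_image.mpr ⟨t, Finset.mem_Icc.mpr ⟨by omega, by omega⟩, ?_⟩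
                  show v (2 * t) = u
                  rw [show 2 * t = i1 from by omega]
                  exact heq
              · exfalso
                have hd : T.dist x (v i1) = T.dist x (P1.getVert (2 * m + (h - j) - i2)) := by
                  rw [heq]
                rw [hv.2, hgb.2, hzlev.2] at hd
                omega
            · exfalso
              have hw := (halt i1 (by omega)).2 p1
              have hnr := hWnr _ hw
              rw [heq] at hnr
              exact hnr hgb.1
          · have c1b : i1 < 2 * m + (h - j) := by omega
            rw [e2 i1 c1 c1b] at heq
            have hga := hg1 (2 * m + (h - j) - i1) (by omega)
            have hd : T.dist x (P1.getVert (2 * m + (h - j) - i1)) =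
                T.dist x (P1.getVert (2 * m + (h - j) - i2)) := by rw [heq]
            rw [hga.2, hgb.2] at hd
            omega
        · -- i2 on the geodesic to v 0
          rw [e3 i2 c3] at heq
          have hgb := hg2 (i2 - (2 * m + (h - j))) (by omega)
          rcases lt_or_ge i1 (2 * m) with c1 | c1
          · rw [e1 i1 c1] at heq
            rcases Nat.even_or_odd i1 with p1 | p1
            · exfalso
              have hv := dv i1 c1 p1
              have hd : T.dist x (v i1) = T.dist x (P2.getVert (i2 - (2 * m + (h - j)))) := by
                rw [heq]
              rw [hv.2, hgb.2, hzlev.2] at hd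
              omega
            · exfalso
              have hw := (halt i1 (by omega)).2 p1
              have hnr := hWnr _ hw
              rw [heq] at hnr
              exact hnr hgb.1
          · rcases lt_or_ge i1 (2 * m + (h - j)) with c1b | c1b
            · exfalso
              rw [e2 i1 c1 c1b] at heq
              have hga := hg1 (2 * m + (h - j) - i1) (by omega)
              have hd : T.dist x (P1.getVert (2 * m + (h - j) - i1)) =
                  T.dist x (P2.getVert (i2 - (2 * m + (h - j)))) := by rw [heq]
              rw [hga.2, hgb.2] at hd
              exact hcross (2 * m + (h - j) - i1) (i2 - (2 * m + (h - j)))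
                (by omega) (by omega) (by omega) (by omega) heq
            · rw [e3 i1 c1b] at heq
              have hga := hg2 (i1 - (2 * m + (h - j))) (by omega)
              have hd : T.dist x (P2.getVert (i1 - (2 * m + (h - j)))) =
                  T.dist x (P2.getVert (i2 - (2 * m + (h - j)))) := by rw [heq]
              rw [hga.2, hgb.2] at hd
              omega
    refine ⟨?_, ?_, ?_, ?_⟩
    · intro i1 hi1 i2 hi2 heq
      simp only [Set.mem_Iio] at hi1 hi2
      rcases le_total i1 i2 with hc | hc
      · exact key i1 i2 hi1 hi2 hc heq
      · exact (key i2 i1 hi2 hi1 hc heq.symm).symm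
    · -- the edges
      intro i hi
      by_cases hc1 : i < 2 * m - 1
      · have hmod : (i + 1) % (2 * k) = i + 1 := Nat.mod_eq_of_lt (by omega)
        rw [hmod, e1 i (by omega), e1 (i + 1) (by omega)]
        exact hFG (hadj i hc1)
      by_cases hc2 : i = 2 * m - 1
      · have hmod : (i + 1) % (2 * k) = 2 * m := by
          rw [hc2, show 2 * m - 1 + 1 = 2 * m from by omega]
          exact Nat.mod_eq_of_lt (by omega)
        rw [hmod, e1 i (by omega), e2 (2 * m) le_rfl (by omega),
          show 2 * m + (h - j) - 2 * m = h - j from by omega, hP1u, hc2]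
        exact hFG huF
      by_cases hc3 : i < 2 * m + (h - j)
      · have hi2m : 2 * m ≤ i := by omega
        have hmod : (i + 1) % (2 * k) = i + 1 := Nat.mod_eq_of_lt (by omega)
        have hnext : wf (i + 1) = P1.getVert (2 * m + (h - j) - (i + 1)) := by
          by_cases hc4 : i + 1 < 2 * m + (h - j)
          · exact e2 (i + 1) (by omega) hc4
          · rw [e3 (i + 1) (by omega),
              show i + 1 - (2 * m + (h - j)) = 0 from by omega,
              show 2 * m + (h - j) - (i + 1) = 0 from by omega,
              P2.getVert_zero, P1.getVert_zero]
        have hstep := P1.adj_getVert_succ (i := 2 * m + (h - j) - (i + 1)) (by omega)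
        rw [show 2 * m + (h - j) - (i + 1) + 1 = 2 * m + (h - j) - i from by omega] at hstep
        rw [hmod, e2 i hi2m hc3, hnext]
        exact hTG hstep.symm
      by_cases hc4 : i < 2 * k - 1
      · have hmod : (i + 1) % (2 * k) = i + 1 := Nat.mod_eq_of_lt (by omega)
        rw [hmod, e3 i (by omega), e3 (i + 1) (by omega)]
        have hstep := P2.adj_getVert_succ (i := i - (2 * m + (h - j))) (by omega)
        rw [show i - (2 * m + (h - j)) + 1 = i + 1 - (2 * m + (h - j)) from by omega] at hstep
        exact hTG hstep
      · have hieq : i = 2 * k - 1 := by omega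
        have hmod : (i + 1) % (2 * k) = 0 := by
          rw [hieq, show 2 * k - 1 + 1 = 2 * k from by omega]
          exact Nat.mod_self _
        rw [hmod, e3 i (by omega), e1 0 (by omega)]
        have hstep := P2.adj_getVert_succ (i := (h - j) - 1) (by omega)
        rw [show (h - j) - 1 + 1 = h - j from by omega, hP2v0] at hstep
        rw [show i - (2 * m + (h - j)) = (h - j) - 1 from by omega]
        exact hTG hstep
    · -- the vertex in level j
      refine ⟨2 * m + (h - j), by omega, ?_⟩
      rw [e3 _ le_rfl, Nat.sub_self, P2.getVert_zero]
      exact hzlev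
    · -- the path edges are covered
      intro e he
      obtain ⟨i, hi, rfl⟩ := he
      simp only [Set.mem_Iio] at hi
      refine ⟨i, by simp only [Set.mem_Iio]; omega, ?_⟩
      show s(wf i, wf ((i + 1) % (2 * k))) = s(v i, v (i + 1))
      rw [Nat.mod_eq_of_lt (by omega), e1 i (by omega), e1 (i + 1) (by omega)]
  exact ⟨_, main
    (fun i => if i < 2 * m then v i
      else if i < 2 * m + (h - j) then P1.getVert (2 * m + (h - j) - i)
      else P2.getVert (i - (2 * m + (h - j))))
    (fun i hi => by show (if i < 2 * m then v i else _) = v i; rw [if_pos hi])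
    (fun i hi1 hi2 => by
      show (if i < 2 * m then v i else if i < 2 * m + (h - j) then _ else _) = _
      rw [if_neg (by omega), if_pos hi2])
    (fun i hi => by
      show (if i < 2 * m then v i else if i < 2 * m + (h - j) then _ else _) = _
      rw [if_neg (by omega), if_neg (by omega)])⟩

end Helpers

/-- **Path-to-cycle extension claim.** Let `T ≤ G` be a tree of height `h ≤ k` rooted at `x`,
`W` disjoint from `V(T)`, and let `F ≤ G` be a bipartite graph between `L_h` and `W_j ⊆ W` in
which every `w ∈ W_j` sends all its edges into the leaves `L_h ∩ V(T_{z})` of the subtree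
rooted at a single vertex `z = r(w) ∈ L_j`, and has at least `k` neighbours in
`L_h ∩ V(T_{r(w)})` outside `T_{z'}` for each child `z'` of `r(w)`.  Then every path of length
`2m - 1` in `F`, where `m = k - (h - j)`, extends to a cycle of length `2k` in `G` containing a
vertex of `L_j`. -/
theorem path_extends_to_cycle {V : Type*} [Fintype V]
    (G T F : SimpleGraph V) (x : V) (h k j : ℕ)
    (hh : 1 ≤ h) (hhk : h ≤ k) (hj1 : 1 ≤ j) (hjh : j ≤ h)
    (hTG : T ≤ G) (hFG : F ≤ G)
    (hacyc : T.IsAcyclic)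
    (hconn : ∀ v ∈ T.support, T.Reachable x v)
    (hheight : ∀ v : V, T.Reachable x v → T.dist x v ≤ h)
    (W Wj : Set V) (hWjW : Wj ⊆ W) (hW : Disjoint W (treeVerts T x))
    (hbip : ∀ u w : V, F.Adj u w →
      (u ∈ level T x h ∧ w ∈ Wj) ∨ (u ∈ Wj ∧ w ∈ level T x h))
    (hsector : ∀ w ∈ Wj, ∃ z : V, z ∈ level T x j ∧
      (∀ u : V, F.Adj w u → u ∈ level T x h ∧ InSubtree T x z u) ∧
      (∀ z' : V, T.Adj z z' → T.dist x z' = T.dist x z + 1 →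
        k ≤ {u : V | F.Adj w u ∧ u ∈ level T x h ∧ InSubtree T x z u ∧
              ¬ InSubtree T x z' u}.ncard)) :
    ∀ v : ℕ → V, Set.InjOn v (Set.Iic (2 * (k - (h - j)) - 1)) →
      (∀ i < 2 * (k - (h - j)) - 1, F.Adj (v i) (v (i + 1))) →
      ∃ w : ℕ → V, Set.InjOn w (Set.Iio (2 * k)) ∧
        (∀ i < 2 * k, G.Adj (w i) (w ((i + 1) % (2 * k)))) ∧
        (∃ i < 2 * k, w i ∈ level T x j) ∧
        ((fun i => s(v i, v (i + 1))) '' Set.Iio (2 * (k - (h - j)) - 1)) ⊆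
          ((fun i => s(w i, w ((i + 1) % (2 * k)))) '' Set.Iio (2 * k)) := by
  intro v hvinj hadj
  have hm1 : 1 ≤ k - (h - j) := by omega
  rcases eq_or_lt_of_le hjh with hje | hjlt
  · -- degenerate case h = j
    have hd0 : h - j = 0 := by omega
    have hone : ∀ w ∈ Wj, ∀ u1 u2 : V, F.Adj w u1 → F.Adj w u2 → u1 = u2 := by
      intro w hw u1 u2 ha1 ha2
      obtain ⟨z, hzlev, hzall, _⟩ := hsector w hw
      have e1 := hzall u1 ha1
      have e2 := hzall u2 ha2
      have d1 : T.dist z u1 = 0 := by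
        have f1 := e1.2.2
        have f2 := e1.1.2
        have f3 := hzlev.2
        omega
      have d2 : T.dist z u2 = 0 := by
        have f1 := e2.2.2
        have f2 := e2.1.2
        have f3 := hzlev.2
        omega
      have r1 : T.Reachable z u1 := hzlev.1.symm.trans e1.1.1
      have r2 : T.Reachable z u2 := hzlev.1.symm.trans e2.1.1
      rw [← r1.dist_eq_zero_iff.mp d1, ← r2.dist_eq_zero_iff.mp d2]
    rcases eq_or_lt_of_le (show 1 ≤ k from by omega) with hk1 | hk2
    · -- k = 1 : the path is a single edge
      have hF : F.Adj (v 0) (v 1) := hadj 0 (by omega)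
      refine ⟨fun i => v (i % 2), ?_, ?_, ?_, ?_⟩
      · intro i1 hi1 i2 hi2 heq
        simp only [Set.mem_Iio] at hi1 hi2
        have h2k : 2 * k = 2 := by omega
        rw [h2k] at hi1 hi2
        have hne : v 0 ≠ v 1 := hF.ne
        interval_cases i1 <;> interval_cases i2 <;>
          first
            | rfl
            | (exfalso; revert heq; simp only []; norm_num; exact fun hq => hne hq)
            | (exfalso; revert heq; simp only []; norm_num; exact fun hq => hne hq.symm)
      · intro i hi
        have h2k : 2 * k = 2 := by omega
        rw [h2k] at hi ⊢
        interval_cases i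
        · simpa using hFG hF
        · simpa using (hFG hF).symm
      · rcases hbip _ _ hF with ⟨hl, _⟩ | ⟨_, hl⟩
        · exact ⟨0, by omega, by rw [hje]; exact hl⟩
        · exact ⟨1, by omega, by rw [hje]; simpa using hl⟩
      · intro e he
        obtain ⟨i, hi, rfl⟩ := he
        simp only [Set.mem_Iio] at hi
        have hi0 : i = 0 := by omega
        subst hi0
        refine ⟨0, by simp only [Set.mem_Iio]; omega, ?_⟩
        show s(v (0 % 2), v ((0 + 1) % (2 * k) % 2)) = s(v 0, v (0 + 1))
        rw [show 2 * k = 2 from by omega]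
    · -- k ≥ 2 together with h = j is impossible
      exfalso
      rcases hbip _ _ (hadj 0 (by omega)) with ⟨h0, h1⟩ | ⟨h0, h1⟩
      · have e02 : v 0 = v 2 :=
          hone _ h1 _ _ (hadj 0 (by omega)).symm (hadj 1 (by omega))
        have := hvinj (show (0:ℕ) ∈ Set.Iic _ from by simp only [Set.mem_Iic]; omega)
          (show (2:ℕ) ∈ Set.Iic _ from by simp only [Set.mem_Iic]; omega) e02
        omega
      · have hdisj : ∀ y, y ∈ level T x h → y ∉ Wj := fun y hy hy2 =>
          Set.disjoint_left.mp hW (hWjW hy2) hy.1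
        have h2w : v 2 ∈ Wj := by
          rcases hbip _ _ (hadj 1 (by omega)) with ⟨_, hx2⟩ | ⟨hx1, _⟩
          · exact hx2
          · exact absurd hx1 (hdisj _ h1)
        have e13 : v 1 = v 3 :=
          hone _ h2w _ _ (hadj 1 (by omega)).symm (hadj 2 (by omega))
        have := hvinj (show (1:ℕ) ∈ Set.Iic _ from by simp only [Set.mem_Iic]; omega)
          (show (3:ℕ) ∈ Set.Iic _ from by simp only [Set.mem_Iic]; omega) e13
        omega
  · -- main case j < h
    rcases hbip _ _ (hadj 0 (by omega)) with ⟨h0, _⟩ | ⟨h0, h1⟩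
    · exact caseA G T F x h k j hhk hj1 hjlt hTG hFG hacyc W Wj hWjW hW hbip hsector
        v hvinj hadj h0
    · -- reverse the path
      have hN1 : 1 ≤ 2 * (k - (h - j)) - 1 := by omega
      have halt2 := alternation hWjW hW hbip (fun i => v (i + 1))
        (2 * (k - (h - j)) - 1 - 1) (fun i hi => hadj (i + 1) (by omega)) h1
      have hvN : v (2 * (k - (h - j)) - 1) ∈ level T x h := by
        have h2 := (halt2 (2 * (k - (h - j)) - 1 - 1) le_rfl).1 ⟨k - (h - j) - 1, by omega⟩
        rwa [show 2 * (k - (h - j)) - 1 - 1 + 1 = 2 * (k - (h - j)) - 1 from by omega] at h2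
      have hvinj' : Set.InjOn (fun i => v (2 * (k - (h - j)) - 1 - i))
          (Set.Iic (2 * (k - (h - j)) - 1)) := by
        intro a ha b hb heq
        simp only [Set.mem_Iic] at ha hb
        have := hvinj (show 2 * (k - (h - j)) - 1 - a ∈ Set.Iic _ from by
            simp only [Set.mem_Iic]; omega)
          (show 2 * (k - (h - j)) - 1 - b ∈ Set.Iic _ from by
            simp only [Set.mem_Iic]; omega) heq
        omega
      have hadj' : ∀ i < 2 * (k - (h - j)) - 1,
          F.Adj ((fun i => v (2 * (k - (h - j)) - 1 - i)) i)
            ((fun i => v (2 * (k - (h - j)) - 1 - i)) (i + 1)) := by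
        intro i hi
        have hstep := hadj (2 * (k - (h - j)) - 1 - i - 1) (by omega)
        rw [show 2 * (k - (h - j)) - 1 - i - 1 + 1 = 2 * (k - (h - j)) - 1 - i from by omega]
          at hstep
        show F.Adj (v (2 * (k - (h - j)) - 1 - i)) (v (2 * (k - (h - j)) - 1 - (i + 1)))
        rw [show 2 * (k - (h - j)) - 1 - (i + 1) = 2 * (k - (h - j)) - 1 - i - 1 from by omega]
        exact hstep.symm
      obtain ⟨w, hw1, hw2, hw3, hw4⟩ := caseA G T F x h k j hhk hj1 hjlt hTG hFG hacyc
        W Wj hWjW hW hbip hsector (fun i => v (2 * (k - (h - j)) - 1 - i)) hvinj' hadj'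
        (by show v (2 * (k - (h - j)) - 1 - 0) ∈ level T x h; simpa using hvN)
      refine ⟨w, hw1, hw2, hw3, ?_⟩
      intro e he
      obtain ⟨i, hi, rfl⟩ := he
      simp only [Set.mem_Iio] at hi
      apply hw4
      refine ⟨2 * (k - (h - j)) - 1 - 1 - i, by simp only [Set.mem_Iio]; omega, ?_⟩
      show s(v (2 * (k - (h - j)) - 1 - (2 * (k - (h - j)) - 1 - 1 - i)),
          v (2 * (k - (h - j)) - 1 - (2 * (k - (h - j)) - 1 - 1 - i + 1))) = s(v i, v (i + 1))
      rw [show 2 * (k - (h - j)) - 1 - (2 * (k - (h - j)) - 1 - 1 - i) = i + 1 from by omega,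
        show 2 * (k - (h - j)) - 1 - (2 * (k - (h - j)) - 1 - 1 - i + 1) = i from by omega]
      exact Sym2.eq_swap
end
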